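/- Let α, β > 1, r, s ≥ 0, c ∈ {1/2, 1}, and let a, b : ℝ × [1,∞) → ℂ satisfy |a(k,t)| ≤ μ_{α,r}(k,t) and |b(k,t)| ≤ |κ(k)|^{−1} μ_{β,s}(k,t) for k ≠ 0. Then for every s′ with 0 ≤ s′ ≤ s there exists C such that for all k ∈ ℝ, t ≥ 1, |(a∗b)(k,t)| ≤ C ( max{t^{−s/2}, t^{−(r−c s′)}} μ_{β+c,s′}(k,t) + t^{−s/2} μ_{α,r}(k,t) ). -/

import Mathlib

open MeasureTheory

noncomputable def mu (α r k t : ℝ) : ℝ := 1 / (1 + (|k| * t ^ r) ^ α)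

noncomputable def kappa (k : ℝ) : ℂ := ((k : ℂ)^2 - Complex.I * k) ^ ((1:ℂ)/2)

noncomputable def conv (a b : ℝ → ℝ → ℂ) (k t : ℝ) : ℂ :=
  (1 / (2 * Real.pi) : ℝ) * ∫ k' : ℝ, a (k - k') t * b k' t

open Set

noncomputable def hfun (c k : ℝ) : ℝ := min (|k| ^ (-(1/2) : ℝ)) (|k| ^ (-c))

section Aux

lemma den_pos {X α : ℝ} (hX : 0 ≤ X) : 0 < 1 + X ^ α := by
  have := Real.rpow_nonneg hX α; linarith

lemma X_nonneg (r k t : ℝ) (ht : 0 < t) : 0 ≤ |k| * t ^ r :=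
  mul_nonneg (abs_nonneg k) (Real.rpow_pos_of_pos ht r).le

lemma mu_pos {α r k t : ℝ} (ht : 0 < t) : 0 < mu α r k t :=
  div_pos one_pos (den_pos (X_nonneg r k t ht))

lemma mu_nonneg {α r k t : ℝ} (ht : 0 < t) : 0 ≤ mu α r k t := (mu_pos ht).le

lemma mu_le_one {α r k t : ℝ} (ht : 0 < t) : mu α r k t ≤ 1 := by
  unfold mu
  rw [div_le_one (den_pos (X_nonneg r k t ht))]
  have := Real.rpow_nonneg (X_nonneg r k t ht) α
  linarith

lemma mu_doubling (α r t : ℝ) {k k' : ℝ} (hα : 0 ≤ α) (ht : 0 < t) (h : |k| ≤ 2 * |k'|) :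
    mu α r k' t ≤ 2 ^ α * mu α r k t := by
  have hT : (0:ℝ) < t ^ r := Real.rpow_pos_of_pos ht r
  have hX : 0 ≤ |k| * t ^ r := X_nonneg r k t ht
  have hY : 0 ≤ |k'| * t ^ r := X_nonneg r k' t ht
  have hXY : |k| * t ^ r ≤ 2 * (|k'| * t ^ r) := by nlinarith
  have h1 : (|k| * t ^ r) ^ α ≤ (2:ℝ) ^ α * (|k'| * t ^ r) ^ α := by
    calc (|k| * t ^ r) ^ α ≤ (2 * (|k'| * t ^ r)) ^ α := Real.rpow_le_rpow hX hXY hα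
    _ = (2:ℝ) ^ α * (|k'| * t ^ r) ^ α := Real.mul_rpow (by norm_num) hY
  have h2 : (1:ℝ) ≤ 2 ^ α := Real.one_le_rpow one_le_two hα
  unfold mu
  rw [mul_one_div, div_le_div_iff₀ (den_pos hY) (den_pos hX)]
  nlinarith [Real.rpow_nonneg hY α]

lemma abs_kappa_eq (k : ℝ) :
    ‖kappa k‖ = (‖(k : ℂ)^2 - Complex.I * k‖) ^ ((1:ℝ)/2) := by
  unfold kappa
  have : ((1:ℂ)/2) = (((1:ℝ)/2 : ℝ) : ℂ) := by norm_num
  rw [this, Complex.norm_cpow_real]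

lemma abs_inner (k : ℝ) :
    (‖(k : ℂ)^2 - Complex.I * k‖) = Real.sqrt (k^4 + k^2) := by
  have h : ((k : ℂ)^2 - Complex.I * k) = Complex.mk (k^2) (-k) := by
    apply Complex.ext <;> simp [pow_two]
  rw [h, Complex.norm_def, Complex.normSq_mk]
  ring_nf

lemma le_abs_kappa_half {k : ℝ} : |k| ^ ((1:ℝ)/2) ≤ ‖kappa k‖ := by
  rw [abs_kappa_eq, abs_inner]
  apply Real.rpow_le_rpow (abs_nonneg k) _ (by norm_num)
  have h : |k| = Real.sqrt (k^2) := (Real.sqrt_sq_eq_abs k).symm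
  rw [h]
  apply Real.sqrt_le_sqrt; nlinarith [sq_nonneg k, sq_nonneg (k^2)]

lemma le_abs_kappa_one {k : ℝ} : |k| ≤ ‖kappa k‖ := by
  rw [abs_kappa_eq, abs_inner]
  have h1 : |k| = (k^2 : ℝ) ^ ((1:ℝ)/2) := by
    rw [← Real.sqrt_eq_rpow, Real.sqrt_sq_eq_abs]
  rw [h1]
  apply Real.rpow_le_rpow (sq_nonneg k) _ (by norm_num)
  have h2 : (k^2 : ℝ) = Real.sqrt (k^4) := by
    rw [show (k^4 : ℝ) = (k^2)^2 by ring, Real.sqrt_sq (sq_nonneg k)]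
  rw [h2]
  apply Real.sqrt_le_sqrt; nlinarith [sq_nonneg k]

lemma inv_abs_kappa_le {k c : ℝ} (hk : k ≠ 0) (hc : c = 1/2 ∨ c = 1) :
    (‖kappa k‖)⁻¹ ≤ hfun c k := by
  have hkp : 0 < |k| := abs_pos.mpr hk
  have h1 : (‖kappa k‖)⁻¹ ≤ |k| ^ (-(1/2) : ℝ) := by
    rw [Real.rpow_neg (abs_nonneg k)]
    exact inv_anti₀ (Real.rpow_pos_of_pos hkp _) (by simpa using le_abs_kappa_half)
  have h2 : (‖kappa k‖)⁻¹ ≤ |k| ^ (-c : ℝ) := by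
    rcases hc with rfl | rfl
    · simpa using h1
    · rw [show (-(1:ℝ)) = -1 by norm_num, Real.rpow_neg (abs_nonneg k), Real.rpow_one]
      exact inv_anti₀ hkp le_abs_kappa_one
  exact le_min h1 h2

lemma hfun_nonneg (c k : ℝ) : 0 ≤ hfun c k :=
  le_min (Real.rpow_nonneg (abs_nonneg k) _) (Real.rpow_nonneg (abs_nonneg k) _)

lemma hfun_le_half (c k : ℝ) : hfun c k ≤ |k| ^ (-(1/2) : ℝ) := min_le_left _ _

lemma hfun_le_c (c k : ℝ) : hfun c k ≤ |k| ^ (-c : ℝ) := min_le_right _ _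

lemma measurable_abs_rpow_neg (e : ℝ) (he : 0 ≤ e) :
    Measurable fun k : ℝ => |k| ^ (-e : ℝ) := by
  have h : (fun k : ℝ => |k| ^ (-e : ℝ)) = fun k : ℝ => (|k| ^ (e : ℝ))⁻¹ := by
    funext k; exact Real.rpow_neg (abs_nonneg k) e
  rw [h]
  exact (((Real.continuous_rpow_const he).comp continuous_abs).measurable).inv

lemma measurable_hfun (c : ℝ) (hc : 0 ≤ c) : Measurable (hfun c) := by
  have h1 := measurable_abs_rpow_neg (1/2) (by norm_num)
  have h2 := measurable_abs_rpow_neg c hc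
  exact h1.min h2

lemma measurable_mu (α r t : ℝ) (hα : 0 ≤ α) :
    Measurable fun k : ℝ => mu α r k t := by
  have hcont : Continuous fun k : ℝ => 1 + (|k| * t ^ r) ^ α := by
    apply continuous_const.add
    exact (continuous_abs.mul continuous_const).rpow_const (fun x => Or.inr hα)
  unfold mu
  exact measurable_const.div hcont.measurable

lemma integrable_comp_abs' {g : ℝ → ℝ} (h : IntegrableOn (fun x => g |x|) (Ioi 0)) :
    Integrable fun x : ℝ => g |x| := by
  have int_Iic : IntegrableOn (fun x : ℝ ↦ g |x|) (Iic 0) := by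
    rw [← Measure.map_neg_eq_self (volume : Measure ℝ)]
    have m : MeasurableEmbedding fun x : ℝ => -x := (Homeomorph.neg ℝ).measurableEmbedding
    rw [m.integrableOn_map_iff]
    simp_rw [Function.comp_def, abs_neg, neg_preimage, neg_Iic, neg_zero]
    exact (integrableOn_Ici_iff_integrableOn_Ioi).mpr h
  have hu := int_Iic.union h
  rwa [Iic_union_Ioi, integrableOn_univ] at hu

lemma meas_phi (α : ℝ) (hα : 0 ≤ α) : Measurable fun v : ℝ => (1 + |v| ^ α)⁻¹ :=
  (measurable_const.add ((continuous_abs.rpow_const (fun _ => Or.inr hα)).measurable)).inv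

lemma phi_nonneg (α : ℝ) (v : ℝ) : 0 ≤ (1 + |v| ^ α)⁻¹ := by
  have := Real.rpow_nonneg (abs_nonneg v) α
  positivity

lemma phi_le_one (α v : ℝ) : (1 + |v| ^ α)⁻¹ ≤ 1 := by
  have h := Real.rpow_nonneg (abs_nonneg v) α
  rw [inv_le_one_iff₀]; right; linarith

lemma integrable_phi {α : ℝ} (hα : 1 < α) : Integrable fun v : ℝ => (1 + |v| ^ α)⁻¹ := by
  have hα0 : (0:ℝ) ≤ α := by linarith
  apply integrable_comp_abs' (g := fun x => (1 + x ^ α)⁻¹)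
  have h1 : IntegrableOn (fun x : ℝ => (1 + |x| ^ α)⁻¹) (Ioc 0 1) := by
    apply Measure.integrableOn_of_bounded (M := 1)
    · exact (measure_Ioc_lt_top).ne
    · exact ((meas_phi α hα0).aestronglyMeasurable)
    · refine ae_of_all _ fun x => ?_
      rw [Real.norm_eq_abs, abs_of_nonneg (phi_nonneg α x)]
      exact phi_le_one α x
  have h2 : IntegrableOn (fun x : ℝ => (1 + |x| ^ α)⁻¹) (Ioi 1) := by
    refine Integrable.mono (integrableOn_Ioi_rpow_of_lt (by linarith : -α < -1) one_pos)
      ((meas_phi α hα0).aestronglyMeasurable) ?_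
    rw [ae_restrict_iff' measurableSet_Ioi]
    refine ae_of_all _ fun x hx => ?_
    have hx1 : (1:ℝ) < x := hx
    have hx0 : (0:ℝ) < x := by linarith
    have hxa : |x| = x := abs_of_pos hx0
    have hp : (0:ℝ) < x ^ α := Real.rpow_pos_of_pos hx0 α
    rw [Real.norm_eq_abs, Real.norm_eq_abs, abs_of_nonneg (phi_nonneg α x),
      abs_of_nonneg (Real.rpow_nonneg hx0.le _), Real.rpow_neg hx0.le]
    rw [hxa]
    exact inv_anti₀ hp (by linarith)
  have := h1.union h2
  rwa [Ioc_union_Ioi_eq_Ioi zero_le_one] at this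

lemma meas_psi (β : ℝ) (hβ : 0 ≤ β) :
    Measurable fun v : ℝ => |v| ^ (-(1/2) : ℝ) * (1 + |v| ^ β)⁻¹ := by
  have h : (fun v : ℝ => |v| ^ (-(1/2):ℝ)) = fun v : ℝ => (|v| ^ ((1/2) : ℝ))⁻¹ := by
    funext v; exact Real.rpow_neg (abs_nonneg v) _
  have hm : Measurable fun v : ℝ => |v| ^ (-(1/2):ℝ) := by
    rw [h]
    exact ((Real.continuous_rpow_const (by norm_num)).comp continuous_abs).measurable.inv
  exact hm.mul (meas_phi β hβ)

lemma psi_nonneg (β v : ℝ) : 0 ≤ |v| ^ (-(1/2) : ℝ) * (1 + |v| ^ β)⁻¹ :=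
  mul_nonneg (Real.rpow_nonneg (abs_nonneg v) _) (phi_nonneg β v)

lemma integrable_psi {β : ℝ} (hβ : 1 < β) :
    Integrable fun v : ℝ => |v| ^ (-(1/2) : ℝ) * (1 + |v| ^ β)⁻¹ := by
  have hβ0 : (0:ℝ) ≤ β := by linarith
  apply integrable_comp_abs' (g := fun x => x ^ (-(1/2) : ℝ) * (1 + x ^ β)⁻¹)
  have h1 : IntegrableOn (fun x : ℝ => |x| ^ (-(1/2):ℝ) * (1 + |x| ^ β)⁻¹) (Ioc 0 1) := by
    have hint : IntegrableOn (fun x : ℝ => x ^ (-(1/2) : ℝ)) (Ioc 0 1) := by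
      have := intervalIntegral.intervalIntegrable_rpow' (a := 0) (b := 1)
        (r := -(1/2)) (by norm_num)
      rwa [intervalIntegrable_iff_integrableOn_Ioc_of_le zero_le_one] at this
    refine Integrable.mono hint ((meas_psi β hβ0).aestronglyMeasurable) ?_
    rw [ae_restrict_iff' measurableSet_Ioc]
    refine ae_of_all _ fun x hx => ?_
    have hx0 : (0:ℝ) < x := hx.1
    have hxa : |x| = x := abs_of_pos hx0
    rw [Real.norm_eq_abs, Real.norm_eq_abs, abs_of_nonneg (psi_nonneg β x),
      abs_of_nonneg (Real.rpow_nonneg hx0.le _), hxa]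
    calc x ^ (-(1/2):ℝ) * (1 + x ^ β)⁻¹ ≤ x ^ (-(1/2):ℝ) * 1 := by
          refine mul_le_mul_of_nonneg_left ?_ (Real.rpow_nonneg hx0.le _)
          have := hxa ▸ phi_le_one β x; convert this using 2 <;> rw [hxa]
      _ = x ^ (-(1/2):ℝ) := mul_one _
  have h2 : IntegrableOn (fun x : ℝ => |x| ^ (-(1/2):ℝ) * (1 + |x| ^ β)⁻¹) (Ioi 1) := by
    refine Integrable.mono (integrableOn_Ioi_rpow_of_lt (by linarith : -β < -1) one_pos)
      ((meas_psi β hβ0).aestronglyMeasurable) ?_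
    rw [ae_restrict_iff' measurableSet_Ioi]
    refine ae_of_all _ fun x hx => ?_
    have hx1 : (1:ℝ) < x := hx
    have hx0 : (0:ℝ) < x := by linarith
    have hxa : |x| = x := abs_of_pos hx0
    have hp : (0:ℝ) < x ^ β := Real.rpow_pos_of_pos hx0 β
    rw [Real.norm_eq_abs, Real.norm_eq_abs, abs_of_nonneg (psi_nonneg β x),
      abs_of_nonneg (Real.rpow_nonneg hx0.le _), hxa]
    calc x ^ (-(1/2):ℝ) * (1 + x ^ β)⁻¹ ≤ 1 * (x ^ β)⁻¹ := by
          apply mul_le_mul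
          · exact Real.rpow_le_one_of_one_le_of_nonpos hx1.le (by norm_num)
          · exact inv_anti₀ hp (by linarith)
          · positivity
          · norm_num
      _ = x ^ (-β : ℝ) := by rw [one_mul, Real.rpow_neg hx0.le]
  have := h1.union h2
  rwa [Ioc_union_Ioi_eq_Ioi zero_le_one] at this

lemma mu_eq_phi {α r t : ℝ} (ht : 0 < t) (u : ℝ) :
    mu α r u t = (fun v : ℝ => (1 + |v| ^ α)⁻¹) (t ^ r * u) := by
  have hT : (0:ℝ) < t ^ r := Real.rpow_pos_of_pos ht r
  simp only [mu, one_div]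
  rw [abs_mul, abs_of_pos hT, mul_comm]

lemma integrable_mu {α r t : ℝ} (hα : 1 < α) (ht : 0 < t) :
    Integrable fun u : ℝ => mu α r u t := by
  have hT : (0:ℝ) < t ^ r := Real.rpow_pos_of_pos ht r
  have h := (integrable_phi hα).comp_mul_left' hT.ne'
  refine h.congr ?_
  exact ae_of_all _ fun u => (mu_eq_phi ht u).symm

lemma integral_mu {α r t : ℝ} (ht : 0 < t) :
    ∫ u : ℝ, mu α r u t = t ^ (-r : ℝ) * ∫ v : ℝ, (1 + |v| ^ α)⁻¹ := by
  have hT : (0:ℝ) < t ^ r := Real.rpow_pos_of_pos ht r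
  have h1 : ∫ u : ℝ, mu α r u t = ∫ u : ℝ, (fun v : ℝ => (1 + |v| ^ α)⁻¹) (t ^ r * u) := by
    congr 1; funext u; exact mu_eq_phi ht u
  rw [h1, MeasureTheory.Measure.integral_comp_mul_left (fun v : ℝ => (1 + |v| ^ α)⁻¹) (t ^ r)]
  rw [smul_eq_mul, abs_of_pos (inv_pos.mpr hT), Real.rpow_neg ht.le]

lemma psit_eq {β s t : ℝ} (ht : 0 < t) (u : ℝ) :
    |u| ^ (-(1/2) : ℝ) * mu β s u t
      = (t ^ s) ^ ((1:ℝ)/2) * ((fun v : ℝ => |v| ^ (-(1/2) : ℝ) * (1 + |v| ^ β)⁻¹) (t ^ s * u)) := by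
  have hT : (0:ℝ) < t ^ s := Real.rpow_pos_of_pos ht s
  have e1 : |t ^ s * u| = t ^ s * |u| := by rw [abs_mul, abs_of_pos hT]
  have key : (t ^ s) ^ ((2:ℝ)⁻¹) * (|u| * t ^ s) ^ (-(2⁻¹) : ℝ) = |u| ^ (-(2⁻¹) : ℝ) := by
    calc (t ^ s) ^ ((2:ℝ)⁻¹) * (|u| * t ^ s) ^ (-(2⁻¹) : ℝ)
        = (t ^ s) ^ ((2:ℝ)⁻¹) * (|u| ^ (-(2⁻¹) : ℝ) * (t ^ s) ^ (-(2⁻¹) : ℝ)) := by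
          rw [Real.mul_rpow (abs_nonneg u) hT.le]
      _ = |u| ^ (-(2⁻¹) : ℝ) * ((t ^ s) ^ ((2:ℝ)⁻¹) * (t ^ s) ^ (-(2⁻¹) : ℝ)) := by ring
      _ = |u| ^ (-(2⁻¹) : ℝ) := by rw [← Real.rpow_add hT]; norm_num
  simp only [mu, one_div, e1]
  rw [mul_comm (t ^ s) (|u|), ← mul_assoc, key]

lemma integrable_psit {β s t : ℝ} (hβ : 1 < β) (ht : 0 < t) :
    Integrable fun u : ℝ => |u| ^ (-(1/2) : ℝ) * mu β s u t := by
  have hT : (0:ℝ) < t ^ s := Real.rpow_pos_of_pos ht s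
  have h := (((integrable_psi hβ).comp_mul_left' hT.ne').const_mul ((t ^ s) ^ ((1:ℝ)/2)))
  refine h.congr (ae_of_all _ fun u => (psit_eq ht u).symm)

lemma integral_psit {β s t : ℝ} (ht : 0 < t) :
    ∫ u : ℝ, |u| ^ (-(1/2) : ℝ) * mu β s u t
      = t ^ (-(s/2) : ℝ) * ∫ v : ℝ, |v| ^ (-(1/2) : ℝ) * (1 + |v| ^ β)⁻¹ := by
  have hT : (0:ℝ) < t ^ s := Real.rpow_pos_of_pos ht s
  have h1 : ∫ u : ℝ, |u| ^ (-(1/2) : ℝ) * mu β s u t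
      = (t ^ s) ^ ((1:ℝ)/2) * ∫ u : ℝ,
        (fun v : ℝ => |v| ^ (-(1/2) : ℝ) * (1 + |v| ^ β)⁻¹) (t ^ s * u) := by
    rw [← integral_const_mul]
    congr 1; funext u; exact psit_eq ht u
  rw [h1, MeasureTheory.Measure.integral_comp_mul_left
      (fun v : ℝ => |v| ^ (-(1/2) : ℝ) * (1 + |v| ^ β)⁻¹) (t ^ s), smul_eq_mul,
    abs_of_pos (inv_pos.mpr hT), ← mul_assoc]
  congr 1
  rw [← Real.rpow_neg_one (t ^ s), ← Real.rpow_add hT, ← Real.rpow_mul ht.le]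
  norm_num
  congr 1
  ring

lemma keyineq {β c s s' t k : ℝ} (hβ : 0 ≤ β) (hc : 0 ≤ c) (hss : s' ≤ s)
    (ht : 1 ≤ t) (hx : 1 < |k| * t ^ s') :
    |k| ^ (-c : ℝ) * mu β s k t ≤ 2 * t ^ (c * s') * mu (β + c) s' k t := by
  have ht0 : (0:ℝ) < t := lt_of_lt_of_le one_pos ht
  have hT' : (0:ℝ) < t ^ s' := Real.rpow_pos_of_pos ht0 s'
  have hT : (0:ℝ) < t ^ s := Real.rpow_pos_of_pos ht0 s
  have htc : (0:ℝ) < t ^ (c * s') := Real.rpow_pos_of_pos ht0 _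
  set x := |k| * t ^ s' with hxdef
  set X := |k| * t ^ s with hXdef
  have hkpos : 0 < |k| := by
    rcases (abs_nonneg k).lt_or_eq with h | h
    · exact h
    · exfalso; rw [hxdef, ← h] at hx; simp at hx; linarith
  have hx0 : 0 < x := mul_pos hkpos hT'
  have hX0 : 0 < X := mul_pos hkpos hT
  have hxX : x ≤ X := by
    have h := Real.rpow_le_rpow_of_exponent_le ht hss
    exact mul_le_mul_of_nonneg_left h (abs_nonneg k)
  have e : x ^ (-c : ℝ) = |k| ^ (-c : ℝ) * t ^ (-(c * s')) := by
    rw [hxdef, Real.mul_rpow (abs_nonneg k) hT'.le,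
      ← Real.rpow_mul ht0.le, show s' * -c = -(c * s') by ring]
  have hkx : |k| ^ (-c : ℝ) = x ^ (-c : ℝ) * t ^ (c * s') := by
    rw [e, mul_assoc, ← Real.rpow_add ht0, show -(c * s') + c * s' = 0 by ring,
      Real.rpow_zero, mul_one]
  have f1 : x ^ (-c : ℝ) ≤ 1 := Real.rpow_le_one_of_one_le_of_nonpos hx.le (by linarith)
  have f2 : x ^ (-c : ℝ) * x ^ (β + c) = x ^ β := by
    rw [← Real.rpow_add hx0]; congr 1; ring
  have f3 : x ^ β ≤ X ^ β := Real.rpow_le_rpow hx0.le hxX hβ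
  have hduh : x ^ (-c : ℝ) / (1 + X ^ β) ≤ 2 / (1 + x ^ (β + c)) := by
    rw [div_le_div_iff₀ (den_pos hX0.le) (den_pos hx0.le)]
    nlinarith [Real.rpow_nonneg hX0.le β, Real.rpow_nonneg hx0.le (β + c),
      Real.rpow_nonneg hx0.le (-c : ℝ)]
  have hmu1 : mu β s k t = 1 / (1 + X ^ β) := rfl
  have hmu2 : mu (β + c) s' k t = 1 / (1 + x ^ (β + c)) := rfl
  rw [hmu1, hmu2, hkx]
  calc x ^ (-c : ℝ) * t ^ (c * s') * (1 / (1 + X ^ β))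
      = t ^ (c * s') * (x ^ (-c : ℝ) / (1 + X ^ β)) := by ring
    _ ≤ t ^ (c * s') * (2 / (1 + x ^ (β + c))) := mul_le_mul_of_nonneg_left hduh htc.le
    _ = 2 * t ^ (c * s') * (1 / (1 + x ^ (β + c))) := by ring

end Aux

set_option maxHeartbeats 1000000 in
theorem convolution_singular_bound_gain (α β r s c : ℝ) (hα : 1 < α) (hβ : 1 < β)
    (hr : 0 ≤ r) (hs : 0 ≤ s) (hc : c = 1/2 ∨ c = 1) (a b : ℝ → ℝ → ℂ)
    (ha : ∀ k t : ℝ, 1 ≤ t → ‖a k t‖ ≤ mu α r k t)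
    (hb : ∀ k t : ℝ, k ≠ 0 → 1 ≤ t →
      ‖b k t‖ ≤ (‖kappa k‖)⁻¹ * mu β s k t) :
    ∀ s' : ℝ, 0 ≤ s' → s' ≤ s →
      ∃ C : ℝ, ∀ k t : ℝ, 1 ≤ t →
        ‖conv a b k t‖
          ≤ C * (max (t ^ (-(s/2))) (t ^ (-(r - c * s'))) * mu (β + c) s' k t
                 + t ^ (-(s/2)) * mu α r k t) := by
  intro s' hs'0 hs's
  have hα0 : (0:ℝ) ≤ α := by linarith
  have hβ0 : (0:ℝ) ≤ β := by linarith
  have hc0 : (0:ℝ) ≤ c := by rcases hc with rfl | rfl <;> norm_num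
  set I := ∫ v : ℝ, (1 + |v| ^ α)⁻¹ with hIdef
  set J := ∫ v : ℝ, |v| ^ (-(1/2) : ℝ) * (1 + |v| ^ β)⁻¹ with hJdef
  have hI0 : 0 ≤ I := integral_nonneg (phi_nonneg α)
  have hJ0 : 0 ≤ J := integral_nonneg (psi_nonneg β)
  have h2a : (0:ℝ) ≤ (2:ℝ) ^ α := Real.rpow_nonneg (by norm_num) α
  have h2b : (0:ℝ) ≤ (2:ℝ) ^ β := Real.rpow_nonneg (by norm_num) β
  have h2c : (0:ℝ) ≤ (2:ℝ) ^ c := Real.rpow_nonneg (by norm_num) c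
  set K1 := 2 * J + (2:ℝ) ^ β * (2:ℝ) ^ c * 2 * I with hK1def
  set K2 := (2:ℝ) ^ α * J with hK2def
  have hK10 : 0 ≤ K1 := by
    have h := mul_nonneg (mul_nonneg (mul_nonneg h2b h2c) (by norm_num : (0:ℝ) ≤ 2)) hI0
    simp only [hK1def]; linarith
  have hK20 : 0 ≤ K2 := mul_nonneg h2a hJ0
  refine ⟨K1 + K2, ?_⟩
  intro k t ht
  have ht0 : (0:ℝ) < t := lt_of_lt_of_le one_pos ht
  have hts : (0:ℝ) < t ^ (-(s/2) : ℝ) := Real.rpow_pos_of_pos ht0 _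
  set M := max (t ^ (-(s/2) : ℝ)) (t ^ (-(r - c * s') : ℝ)) with hMdef
  have hM0 : 0 < M := lt_of_lt_of_le hts (le_max_left _ _)
  set mu1 := mu (β + c) s' k t with hmu1def
  set mu2 := mu α r k t with hmu2def
  have hmu10 : 0 ≤ mu1 := mu_nonneg ht0
  have hmu20 : 0 ≤ mu2 := mu_nonneg ht0
  set G := fun k' : ℝ => mu α r (k - k') t * (hfun c k' * mu β s k' t) with hGdef
  have hGmeas : Measurable G :=
    ((measurable_mu α r t hα0).comp (measurable_const.sub measurable_id)).mul
      ((measurable_hfun c hc0).mul (measurable_mu β s t hβ0))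
  have hψint : Integrable (fun u : ℝ => |u| ^ (-(1/2) : ℝ) * mu β s u t) :=
    integrable_psit hβ ht0
  have hψnonneg : ∀ u : ℝ, 0 ≤ |u| ^ (-(1/2) : ℝ) * mu β s u t := fun u =>
    mul_nonneg (Real.rpow_nonneg (abs_nonneg u) _) (mu_nonneg ht0)
  have hGnonneg : ∀ k' : ℝ, 0 ≤ G k' := fun k' =>
    mul_nonneg (mu_nonneg ht0) (mul_nonneg (hfun_nonneg c k') (mu_nonneg ht0))
  have hGle : ∀ k' : ℝ, G k' ≤ |k'| ^ (-(1/2) : ℝ) * mu β s k' t := by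
    intro k'
    calc G k' ≤ 1 * (hfun c k' * mu β s k' t) :=
          mul_le_mul_of_nonneg_right (mu_le_one ht0)
            (mul_nonneg (hfun_nonneg c k') (mu_nonneg ht0))
      _ = hfun c k' * mu β s k' t := one_mul _
      _ ≤ |k'| ^ (-(1/2) : ℝ) * mu β s k' t :=
          mul_le_mul_of_nonneg_right (hfun_le_half c k') (mu_nonneg ht0)
  have hGint : Integrable G := by
    refine hψint.mono' hGmeas.aestronglyMeasurable (ae_of_all _ fun k' => ?_)
    rw [Real.norm_eq_abs, abs_of_nonneg (hGnonneg k')]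
    exact hGle k'
  have hintpsit : ∫ u : ℝ, |u| ^ (-(1/2) : ℝ) * mu β s u t = t ^ (-(s/2) : ℝ) * J :=
    integral_psit ht0
  have hne0 : ∀ᵐ k' : ℝ, k' ≠ 0 := by
    have h : ∀ᵐ x : ℝ, x ∉ ({0} : Set ℝ) :=
      measure_eq_zero_iff_ae_notMem.mp Real.volume_singleton
    simpa using h
  have hpt : ∀ᵐ k' : ℝ, ‖a (k - k') t * b k' t‖ ≤ G k' := by
    filter_upwards [hne0] with k' hk'0
    rw [norm_mul]
    have hb2 : ‖b k' t‖ ≤ hfun c k' * mu β s k' t := by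
      calc ‖b k' t‖ ≤ (‖kappa k'‖)⁻¹ * mu β s k' t :=
            hb k' t hk'0 ht
        _ ≤ hfun c k' * mu β s k' t :=
            mul_le_mul_of_nonneg_right (inv_abs_kappa_le hk'0 hc) (mu_nonneg ht0)
    exact mul_le_mul (ha _ t ht) hb2 (norm_nonneg _) (mu_nonneg ht0)
  have habs : ‖conv a b k t‖ ≤ ∫ k' : ℝ, G k' := by
    have h1 : ‖conv a b k t‖
        = |1 / (2 * Real.pi)| * ‖∫ k' : ℝ, a (k - k') t * b k' t‖ := by
      show ‖((1 / (2 * Real.pi) : ℝ) : ℂ) * _‖ = _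
      rw [norm_mul, Complex.norm_real, Real.norm_eq_abs]
    have h2 : ‖∫ k' : ℝ, a (k - k') t * b k' t‖ ≤ ∫ k' : ℝ, G k' := by
      calc ‖∫ k' : ℝ, a (k - k') t * b k' t‖
          = ‖∫ k' : ℝ, a (k - k') t * b k' t‖ := rfl
        _ ≤ ∫ k' : ℝ, ‖a (k - k') t * b k' t‖ := norm_integral_le_integral_norm _
        _ ≤ ∫ k' : ℝ, G k' := by
            refine integral_mono_of_nonneg (ae_of_all _ fun k' => norm_nonneg _) hGint ?_
            filter_upwards [hpt] with k' h
            simpa using h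
    have hpi : |1 / (2 * Real.pi)| ≤ 1 := by
      rw [abs_of_pos (by positivity)]
      rw [div_le_one (by positivity)]
      linarith [Real.pi_gt_three]
    have hG0 : 0 ≤ ∫ k' : ℝ, G k' := integral_nonneg hGnonneg
    calc ‖conv a b k t‖
        = |1 / (2 * Real.pi)| * ‖∫ k' : ℝ, a (k - k') t * b k' t‖ := h1
      _ ≤ 1 * ∫ k' : ℝ, G k' :=
          mul_le_mul hpi h2 (norm_nonneg _) (by norm_num)
      _ = ∫ k' : ℝ, G k' := one_mul _
  have main : ∫ k' : ℝ, G k'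
      ≤ K1 * (M * mu1) + K2 * (t ^ (-(s/2) : ℝ) * mu2) := by
    by_cases hcase : |k| * t ^ s' ≤ 1
    · have hb1 : ∫ k' : ℝ, G k' ≤ t ^ (-(s/2) : ℝ) * J := by
        rw [← hintpsit]
        exact integral_mono hGint hψint hGle
      have hmu1half : 1 ≤ 2 * mu1 := by
        have hden : 1 + (|k| * t ^ s') ^ (β + c) ≤ 2 := by
          have := Real.rpow_le_one (X_nonneg s' k t ht0) hcase (by linarith : (0:ℝ) ≤ β + c)
          linarith
        have hm : mu1 = 1 / (1 + (|k| * t ^ s') ^ (β + c)) := rfl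
        rw [hm, mul_one_div, le_div_iff₀ (den_pos (X_nonneg s' k t ht0))]
        linarith
      have hMge : t ^ (-(s/2) : ℝ) ≤ M := le_max_left _ _
      have hstep : ∫ k' : ℝ, G k' ≤ 2 * J * (M * mu1) := by
        calc ∫ k' : ℝ, G k' ≤ t ^ (-(s/2) : ℝ) * J := hb1
          _ ≤ t ^ (-(s/2) : ℝ) * J * (2 * mu1) :=
              le_mul_of_one_le_right (by positivity) hmu1half
          _ = 2 * J * (t ^ (-(s/2) : ℝ) * mu1) := by ring
          _ ≤ 2 * J * (M * mu1) := by
              refine mul_le_mul_of_nonneg_left ?_ (by positivity)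
              exact mul_le_mul_of_nonneg_right hMge hmu10
      have h3 : 2 * J ≤ K1 := by
        have h := mul_nonneg (mul_nonneg (mul_nonneg h2b h2c) (by norm_num : (0:ℝ) ≤ 2)) hI0
        simp only [hK1def]; linarith
      have h4 : 0 ≤ M * mu1 := mul_nonneg hM0.le hmu10
      have h5 : 0 ≤ K2 * (t ^ (-(s/2) : ℝ) * mu2) :=
        mul_nonneg hK20 (mul_nonneg hts.le hmu20)
      have h7 : 2 * J * (M * mu1) ≤ K1 * (M * mu1) :=
        mul_le_mul_of_nonneg_right h3 h4
      calc ∫ k' : ℝ, G k' ≤ 2 * J * (M * mu1) := hstep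
        _ ≤ K1 * (M * mu1) := h7
        _ ≤ K1 * (M * mu1) + K2 * (t ^ (-(s/2) : ℝ) * mu2) := le_add_of_nonneg_right h5
    · push_neg at hcase
      have hkpos : 0 < |k| := by
        rcases (abs_nonneg k).lt_or_eq with h | h
        · exact h
        · exfalso; rw [← h] at hcase; simp at hcase
          have := Real.rpow_pos_of_pos ht0 s'
          nlinarith
      set A := {x : ℝ | |x| ≤ |k| / 2} with hAdef
      have hAm : MeasurableSet A := measurableSet_le measurable_abs measurable_const
      have hsplit : ∫ k' : ℝ, G k' = (∫ k' in A, G k') + ∫ k' in Aᶜ, G k' :=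
        (integral_add_compl hAm hGint).symm
      have hApart : ∫ k' in A, G k' ≤ (2:ℝ) ^ α * mu2 * (t ^ (-(s/2) : ℝ) * J) := by
        have hbound : ∀ x ∈ A, G x ≤ (2:ℝ) ^ α * mu2 * (|x| ^ (-(1/2) : ℝ) * mu β s x t) := by
          intro x hx
          have hx2 : |x| ≤ |k| / 2 := hx
          have habs2 : |k| ≤ 2 * |k - x| := by
            have h := abs_sub_abs_le_abs_sub k x
            linarith [abs_nonneg (k - x)]
          have h1 : mu α r (k - x) t ≤ (2:ℝ) ^ α * mu2 := mu_doubling α r t hα0 ht0 habs2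
          calc G x = mu α r (k - x) t * (hfun c x * mu β s x t) := rfl
            _ ≤ (2:ℝ) ^ α * mu2 * (|x| ^ (-(1/2) : ℝ) * mu β s x t) := by
                refine mul_le_mul h1 ?_ (mul_nonneg (hfun_nonneg c x) (mu_nonneg ht0))
                  (mul_nonneg h2a hmu20)
                exact mul_le_mul_of_nonneg_right (hfun_le_half c x) (mu_nonneg ht0)
        calc ∫ k' in A, G k'
            ≤ ∫ k' in A, (2:ℝ) ^ α * mu2 * (|k'| ^ (-(1/2) : ℝ) * mu β s k' t) :=
              setIntegral_mono_on hGint.integrableOn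
                ((hψint.const_mul _).integrableOn) hAm hbound
          _ = (2:ℝ) ^ α * mu2 * ∫ k' in A, |k'| ^ (-(1/2) : ℝ) * mu β s k' t :=
              integral_const_mul _ _
          _ ≤ (2:ℝ) ^ α * mu2 * ∫ k' : ℝ, |k'| ^ (-(1/2) : ℝ) * mu β s k' t := by
              refine mul_le_mul_of_nonneg_left ?_ (mul_nonneg h2a hmu20)
              exact setIntegral_le_integral hψint (ae_of_all _ hψnonneg)
          _ = (2:ℝ) ^ α * mu2 * (t ^ (-(s/2) : ℝ) * J) := by rw [hintpsit]
      have hmuint : Integrable (fun u : ℝ => mu α r (k - u) t) :=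
        (integrable_mu hα ht0).comp_sub_left k
      have hmuB : ∫ u : ℝ, mu α r (k - u) t = t ^ (-r : ℝ) * I := by
        rw [integral_sub_left_eq_self (fun u : ℝ => mu α r u t) volume k]
        exact integral_mu ht0
      set S := (2:ℝ) ^ c * |k| ^ (-c : ℝ) * ((2:ℝ) ^ β * mu β s k t) with hSdef
      have hS0 : 0 ≤ S :=
        mul_nonneg (mul_nonneg h2c (Real.rpow_nonneg (abs_nonneg k) _))
          (mul_nonneg h2b (mu_nonneg ht0))
      have hBbound : ∀ x ∈ Aᶜ, G x ≤ S * mu α r (k - x) t := by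
        intro x hx
        have hx2 : |k| / 2 < |x| := by
          by_contra hcon
          exact hx (by simpa [hAdef] using le_of_not_gt hcon)
        have hk2 : 0 < |k| / 2 := by linarith
        have h1 : hfun c x ≤ (2:ℝ) ^ c * |k| ^ (-c : ℝ) := by
          calc hfun c x ≤ |x| ^ (-c : ℝ) := hfun_le_c c x
            _ ≤ (|k| / 2) ^ (-c : ℝ) :=
                Real.rpow_le_rpow_of_nonpos hk2 hx2.le (neg_nonpos.mpr hc0)
            _ = (2:ℝ) ^ c * |k| ^ (-c : ℝ) := by
                rw [Real.div_rpow (abs_nonneg k) (by norm_num : (0:ℝ) ≤ 2),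
                  Real.rpow_neg (by norm_num : (0:ℝ) ≤ 2), div_eq_mul_inv, inv_inv, mul_comm]
        have h2 : mu β s x t ≤ (2:ℝ) ^ β * mu β s k t :=
          mu_doubling β s t hβ0 ht0 (by linarith : |k| ≤ 2 * |x|)
        calc G x = mu α r (k - x) t * (hfun c x * mu β s x t) := rfl
          _ ≤ mu α r (k - x) t * S := by
              refine mul_le_mul_of_nonneg_left ?_ (mu_nonneg ht0)
              rw [hSdef]
              exact mul_le_mul h1 h2 (mu_nonneg ht0)
                (mul_nonneg h2c (Real.rpow_nonneg (abs_nonneg k) _))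
          _ = S * mu α r (k - x) t := mul_comm _ _
      have hBpart : ∫ k' in Aᶜ, G k' ≤ S * (t ^ (-r : ℝ) * I) := by
        calc ∫ k' in Aᶜ, G k' ≤ ∫ k' in Aᶜ, S * mu α r (k - k') t :=
            setIntegral_mono_on hGint.integrableOn
              ((hmuint.const_mul S).integrableOn) hAm.compl hBbound
          _ = S * ∫ k' in Aᶜ, mu α r (k - k') t := integral_const_mul _ _
          _ ≤ S * ∫ k' : ℝ, mu α r (k - k') t := by
              refine mul_le_mul_of_nonneg_left ?_ hS0
              exact setIntegral_le_integral hmuint (ae_of_all _ fun u => mu_nonneg ht0)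
          _ = S * (t ^ (-r : ℝ) * I) := by rw [hmuB]
      have hkey : S * (t ^ (-r : ℝ) * I)
          ≤ (2:ℝ) ^ β * (2:ℝ) ^ c * 2 * I * (t ^ (-(r - c * s') : ℝ) * mu1) := by
        have hki : |k| ^ (-c : ℝ) * mu β s k t ≤ 2 * t ^ (c * s') * mu1 :=
          keyineq hβ0 hc0 hs's ht hcase
        have htr : (0:ℝ) < t ^ (-r : ℝ) := Real.rpow_pos_of_pos ht0 _
        have ht1 : t ^ (-r : ℝ) * t ^ (c * s') = t ^ (-(r - c * s') : ℝ) := by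
          rw [← Real.rpow_add ht0]; congr 1; ring
        calc S * (t ^ (-r : ℝ) * I)
            = ((2:ℝ) ^ c * (2:ℝ) ^ β * I * t ^ (-r : ℝ)) * (|k| ^ (-c : ℝ) * mu β s k t) := by
              rw [hSdef]; ring
          _ ≤ ((2:ℝ) ^ c * (2:ℝ) ^ β * I * t ^ (-r : ℝ)) * (2 * t ^ (c * s') * mu1) := by
              refine mul_le_mul_of_nonneg_left hki ?_
              exact mul_nonneg (mul_nonneg (mul_nonneg h2c h2b) hI0) htr.le
          _ = (2:ℝ) ^ β * (2:ℝ) ^ c * 2 * I * ((t ^ (-r : ℝ) * t ^ (c * s')) * mu1) := by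
              ring
          _ = (2:ℝ) ^ β * (2:ℝ) ^ c * 2 * I * (t ^ (-(r - c * s') : ℝ) * mu1) := by
              rw [ht1]
      have hMge2 : t ^ (-(r - c * s') : ℝ) ≤ M := le_max_right _ _
      have hBfinal : ∫ k' in Aᶜ, G k' ≤ (2:ℝ) ^ β * (2:ℝ) ^ c * 2 * I * (M * mu1) := by
        refine le_trans (hBpart.trans hkey) ?_
        refine mul_le_mul_of_nonneg_left ?_
          (mul_nonneg (mul_nonneg (mul_nonneg h2b h2c) (by norm_num : (0:ℝ) ≤ 2)) hI0)
        exact mul_le_mul_of_nonneg_right hMge2 hmu10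
      have hAfinal : ∫ k' in A, G k' ≤ K2 * (t ^ (-(s/2) : ℝ) * mu2) := by
        refine hApart.trans (le_of_eq ?_)
        simp only [hK2def]; ring
      have h6 : (2:ℝ) ^ β * (2:ℝ) ^ c * 2 * I * (M * mu1) ≤ K1 * (M * mu1) := by
        refine mul_le_mul_of_nonneg_right ?_ (mul_nonneg hM0.le hmu10)
        simp only [hK1def]; linarith
      calc ∫ k' : ℝ, G k' = (∫ k' in A, G k') + ∫ k' in Aᶜ, G k' := hsplit
        _ ≤ K2 * (t ^ (-(s/2) : ℝ) * mu2) + K1 * (M * mu1) :=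
            add_le_add hAfinal (hBfinal.trans h6)
        _ = K1 * (M * mu1) + K2 * (t ^ (-(s/2) : ℝ) * mu2) := add_comm _ _
  calc ‖conv a b k t‖ ≤ ∫ k' : ℝ, G k' := habs
    _ ≤ K1 * (M * mu1) + K2 * (t ^ (-(s/2) : ℝ) * mu2) := main
    _ ≤ (K1 + K2) * (M * mu1 + t ^ (-(s/2) : ℝ) * mu2) := by
        have h4 : 0 ≤ M * mu1 := mul_nonneg hM0.le hmu10
        have h5 : 0 ≤ t ^ (-(s/2) : ℝ) * mu2 := mul_nonneg hts.le hmu20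
        have h8 : 0 ≤ K1 * (t ^ (-(s/2) : ℝ) * mu2) := mul_nonneg hK10 h5
        have h9 : 0 ≤ K2 * (M * mu1) := mul_nonneg hK20 h4
        calc K1 * (M * mu1) + K2 * (t ^ (-(s/2) : ℝ) * mu2)
            ≤ K1 * (M * mu1) + K2 * (t ^ (-(s/2) : ℝ) * mu2)
              + (K1 * (t ^ (-(s/2) : ℝ) * mu2) + K2 * (M * mu1)) :=
              le_add_of_nonneg_right (add_nonneg h8 h9)
          _ = (K1 + K2) * (M * mu1 + t ^ (-(s/2) : ℝ) * mu2) := by ring
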